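/- arXiv:2311.10446 — 2 statements merged into one kernel-verified Lean document; each statement's English description precedes it below -/
import Mathlib

section
/- Let P_1 be a finite measure on ℝ^D supported in the closed unit ball that is not a Dirac measure (i.e. not concentrated at a single point), and let φ(x) = log ∫ exp(x·σ) dP_1(σ). Then there exists y ∈ ℝ^D such that y^T ∇²φ(x) y > 0 for every x ∈ ℝ^D. -/
open MeasureTheory

set_option synthInstance.maxHeartbeats 1000000
set_option maxHeartbeats 1000000

noncomputable section
namespace Stmt6Aux


variable {D : ℕ} (P1 : Measure (EuclideanSpace ℝ (Fin D))) [IsFiniteMeasure P1]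

local notation "E" => EuclideanSpace ℝ (Fin D)

lemma integrable_aux {F : Type*} [NormedAddCommGroup F]
    (hb : ∀ᵐ σ ∂P1, ‖σ‖ ≤ 1) {g : E → F} (hg : Continuous g)
    (C : ℝ) (hC : ∀ σ : E, ‖σ‖ ≤ 1 → ‖g σ‖ ≤ C) : Integrable g P1 :=
  Integrable.mono' (integrable_const C) hg.aestronglyMeasurable (hb.mono fun σ h => hC σ h)

lemma inner_le_of_norm_le {x σ : E} (h : ‖σ‖ ≤ 1) : (inner ℝ x σ : ℝ) ≤ ‖x‖ :=
  le_trans (real_inner_le_norm x σ) (mul_le_of_le_one_right (norm_nonneg x) h)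

lemma hasfd_exp (σ x : E) :
    HasFDerivAt (fun x : E => Real.exp (inner ℝ x σ : ℝ))
      (Real.exp (inner ℝ x σ : ℝ) • innerSL ℝ σ) x := by
  have h1 : HasFDerivAt (fun x : E => (inner ℝ x σ : ℝ)) (innerSL ℝ σ) x := by
    have he : (fun x : E => (inner ℝ x σ : ℝ)) = fun x : E => innerSL ℝ σ x :=
      funext fun x => by simp [real_inner_comm x σ]
    rw [he]
    exact (innerSL ℝ σ).hasFDerivAt
  exact h1.exp

/-- Laplace transform. -/
def L (x : E) : ℝ := ∫ σ, Real.exp (inner ℝ x σ : ℝ) ∂P1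

/-- first derivative -/
def G (x : E) : EuclideanSpace ℝ (Fin D) →L[ℝ] ℝ :=
  ∫ σ, Real.exp (inner ℝ x σ : ℝ) • innerSL ℝ σ ∂P1

/-- second derivative -/
def Hm (x : E) : EuclideanSpace ℝ (Fin D) →L[ℝ] (EuclideanSpace ℝ (Fin D) →L[ℝ] ℝ) :=
  ∫ σ, (Real.exp (inner ℝ x σ : ℝ) • innerSL ℝ σ).smulRight (innerSL ℝ σ) ∂P1

lemma contG (x : E) : Continuous fun σ : E => Real.exp (inner ℝ x σ : ℝ) • innerSL ℝ σ :=
  ((Real.continuous_exp.comp (Continuous.inner continuous_const continuous_id)).smul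
    (innerSL ℝ).continuous)

lemma contH (x : E) : Continuous fun σ : E =>
    (Real.exp (inner ℝ x σ : ℝ) • innerSL ℝ σ).smulRight (innerSL ℝ σ) := by
  exact (ContinuousLinearMap.smulRightL ℝ (EuclideanSpace ℝ (Fin D))
    (EuclideanSpace ℝ (Fin D) →L[ℝ] ℝ)).continuous₂.comp
    ((contG x).prodMk (innerSL ℝ).continuous)

lemma ieL (hb : ∀ᵐ σ ∂P1, ‖σ‖ ≤ 1) (x : E) :
    Integrable (fun σ : E => Real.exp (inner ℝ x σ : ℝ)) P1 := by
  refine integrable_aux P1 hb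
    (Real.continuous_exp.comp (Continuous.inner continuous_const continuous_id))
    (Real.exp ‖x‖) fun σ h => ?_
  rw [Real.norm_eq_abs, abs_of_pos (Real.exp_pos _)]
  exact Real.exp_le_exp.2 (inner_le_of_norm_le h)

lemma normG_le {x σ : E} (h : ‖σ‖ ≤ 1) :
    ‖Real.exp (inner ℝ x σ : ℝ) • innerSL ℝ σ‖ ≤ Real.exp ‖x‖ := by
  rw [norm_smul (Real.exp (inner ℝ x σ : ℝ)) ((innerSL ℝ) σ), Real.norm_eq_abs, abs_of_pos (Real.exp_pos _), innerSL_apply_norm]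
  calc Real.exp (inner ℝ x σ : ℝ) * ‖σ‖ ≤ Real.exp ‖x‖ * 1 :=
        mul_le_mul (Real.exp_le_exp.2 (inner_le_of_norm_le h)) h (norm_nonneg _)
          (Real.exp_pos _).le
    _ = Real.exp ‖x‖ := mul_one _

lemma normH_le {x σ : E} (h : ‖σ‖ ≤ 1) :
    ‖(Real.exp (inner ℝ x σ : ℝ) • innerSL ℝ σ).smulRight (innerSL ℝ σ)‖ ≤ Real.exp ‖x‖ := by
  rw [ContinuousLinearMap.norm_smulRight_apply, innerSL_apply_norm]
  calc ‖Real.exp (inner ℝ x σ : ℝ) • innerSL ℝ σ‖ * ‖σ‖ ≤ Real.exp ‖x‖ * 1 :=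
        mul_le_mul (normG_le h) h (norm_nonneg _) (Real.exp_pos _).le
    _ = Real.exp ‖x‖ := mul_one _

lemma ieG (hb : ∀ᵐ σ ∂P1, ‖σ‖ ≤ 1) (x : E) :
    Integrable (fun σ : E => Real.exp (inner ℝ x σ : ℝ) • innerSL ℝ σ) P1 :=
  integrable_aux P1 hb (contG x) (Real.exp ‖x‖) fun _ h => normG_le h

lemma ieH (hb : ∀ᵐ σ ∂P1, ‖σ‖ ≤ 1) (x : E) : @Integrable (E →L[ℝ] E →L[ℝ] ℝ) _
    (@SeminormedAddGroup.toContinuousENorm (E →L[ℝ] E →L[ℝ] ℝ) _) E _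
    (fun σ : E => (Real.exp (inner ℝ x σ : ℝ) • innerSL ℝ σ).smulRight (innerSL ℝ σ)) P1 :=
  integrable_aux (F := E →L[ℝ] E →L[ℝ] ℝ) P1 hb (contH x) (Real.exp ‖x‖) fun _ h => normH_le h

lemma norm_le_of_ball {x₀ x : E} (hx : x ∈ Metric.ball x₀ 1) : ‖x‖ ≤ ‖x₀‖ + 1 := by
  have h1 := mem_ball_iff_norm.1 hx
  have h2 : x = x₀ + (x - x₀) := by abel
  calc ‖x‖ = ‖x₀ + (x - x₀)‖ := by rw [← h2]
    _ ≤ ‖x₀‖ + ‖x - x₀‖ := norm_add_le _ _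
    _ ≤ ‖x₀‖ + 1 := by linarith

lemma hDL (hb : ∀ᵐ σ ∂P1, ‖σ‖ ≤ 1) (x₀ : E) : HasFDerivAt (L P1) (G P1 x₀) x₀ := by
  refine hasFDerivAt_integral_of_dominated_of_fderiv_le (F := fun x σ => Real.exp (inner ℝ x σ : ℝ))
    (F' := fun x σ => Real.exp (inner ℝ x σ : ℝ) • innerSL ℝ σ)
    (bound := fun _ => Real.exp (‖x₀‖ + 1)) (Metric.ball_mem_nhds x₀ one_pos)
    (Filter.Eventually.of_forall fun x =>
      (Real.continuous_exp.comp (Continuous.inner continuous_const continuous_id)).aestronglyMeasurable)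
    (ieL P1 hb x₀) ((contG x₀).aestronglyMeasurable) ?_ (integrable_const _) ?_
  · filter_upwards [hb] with σ hσ
    intro x hx
    exact le_trans (normG_le hσ) (Real.exp_le_exp.2 (norm_le_of_ball hx))
  · filter_upwards with σ
    intro x _
    exact hasfd_exp σ x

lemma hDG (hb : ∀ᵐ σ ∂P1, ‖σ‖ ≤ 1) (x₀ : E) : HasFDerivAt (G P1) (Hm P1 x₀) x₀ := by
  refine hasFDerivAt_integral_of_dominated_of_fderiv_le
    (F := fun x σ => Real.exp (inner ℝ x σ : ℝ) • innerSL ℝ σ)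
    (F' := fun x σ => (Real.exp (inner ℝ x σ : ℝ) • innerSL ℝ σ).smulRight (innerSL ℝ σ))
    (bound := fun _ => Real.exp (‖x₀‖ + 1)) (Metric.ball_mem_nhds x₀ one_pos)
    (Filter.Eventually.of_forall fun x => (contG x).aestronglyMeasurable)
    (ieG P1 hb x₀) ((contH x₀).aestronglyMeasurable) ?_ (integrable_const _) ?_
  · filter_upwards [hb] with σ hσ
    intro x hx
    exact le_trans (normH_le hσ) (Real.exp_le_exp.2 (norm_le_of_ball hx))
  · filter_upwards with σ
    intro x _
    exact (hasfd_exp σ x).smul_const (innerSL ℝ σ)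


lemma abs_inner_le {σ y : EuclideanSpace ℝ (Fin D)} (h : ‖σ‖ ≤ 1) :
    |(inner ℝ σ y : ℝ)| ≤ ‖y‖ := by
  calc |(inner ℝ σ y : ℝ)| ≤ ‖σ‖ * ‖y‖ := abs_real_inner_le_norm σ y
    _ ≤ 1 * ‖y‖ := mul_le_mul_of_nonneg_right h (norm_nonneg y)
    _ = ‖y‖ := one_mul _

lemma exists_y (hnd : ¬ ∃ (c : ENNReal) (σ0 : EuclideanSpace ℝ (Fin D)), P1 = c • Measure.dirac σ0) :
    ∃ y : EuclideanSpace ℝ (Fin D), ∀ c : ℝ,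
      P1 {σ : EuclideanSpace ℝ (Fin D) | (inner ℝ σ y : ℝ) ≠ c} ≠ 0 := by
  by_contra h
  push_neg at h
  choose c hc using h
  set σ0 : EuclideanSpace ℝ (Fin D) := WithLp.toLp 2 (fun i => c (EuclideanSpace.single i 1)) with hσ0
  have hnull : P1 {σ | σ ≠ σ0} = 0 := by
    have hsub : {σ : EuclideanSpace ℝ (Fin D) | σ ≠ σ0} ⊆
        ⋃ i : Fin D, {σ | (inner ℝ σ (EuclideanSpace.single i 1) : ℝ) ≠ c (EuclideanSpace.single i 1)} := by
      intro σ hσ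
      simp only [Set.mem_setOf_eq] at hσ
      by_contra hmem
      simp only [Set.mem_iUnion, not_exists, Set.mem_setOf_eq, not_not] at hmem
      apply hσ
      ext i
      show σ i = c (EuclideanSpace.single i 1)
      simpa [EuclideanSpace.inner_single_right] using hmem i
    exact measure_mono_null hsub (measure_iUnion_null fun i => hc _)
  apply hnd
  refine ⟨P1 Set.univ, σ0, ?_⟩
  ext s hs
  rw [Measure.smul_apply, Measure.dirac_apply' _ hs, smul_eq_mul]
  by_cases h0 : σ0 ∈ s
  · rw [Set.indicator_of_mem h0, Pi.one_apply, mul_one]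
    refine le_antisymm (measure_mono (Set.subset_univ s)) ?_
    calc P1 Set.univ ≤ P1 (s ∪ {σ | σ ≠ σ0}) := by
          apply measure_mono; intro σ _
          by_cases hσ : σ = σ0
          · exact Or.inl (hσ ▸ h0)
          · exact Or.inr hσ
      _ ≤ P1 s + P1 {σ | σ ≠ σ0} := measure_union_le _ _
      _ = P1 s := by rw [hnull, add_zero]
  · rw [Set.indicator_of_notMem h0, mul_zero]
    refine measure_mono_null ?_ hnull
    intro σ hσ he
    exact h0 (he ▸ hσ)

end Stmt6Aux
end

open Stmt6Aux

/-- If `P1` is a finite measure supported in the unit ball which is not (a multiple of) a Dirac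
measure, then there is a direction `y` along which the Hessian of the log-Laplace transform `φ`
is strictly positive at every point. -/
theorem stmt6 {D : ℕ} (P1 : Measure (EuclideanSpace ℝ (Fin D))) [IsFiniteMeasure P1]
    (hsupp : P1 (Metric.closedBall 0 1)ᶜ = 0)
    (hnd : ¬ ∃ (c : ENNReal) (σ0 : EuclideanSpace ℝ (Fin D)), P1 = c • Measure.dirac σ0)
    (φ : EuclideanSpace ℝ (Fin D) → ℝ)
    (hφ : ∀ x, φ x = Real.log (∫ σ, Real.exp ((inner ℝ x σ : ℝ)) ∂P1)) :
    ∃ y : EuclideanSpace ℝ (Fin D), ∀ x, 0 < (fderiv ℝ (fderiv ℝ φ) x) y y := by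
  have hb : ∀ᵐ σ ∂P1, ‖σ‖ ≤ 1 := by
    rw [ae_iff]
    convert hsupp using 2
    ext σ
    simp [Metric.mem_closedBall, dist_zero_right, not_le]
  have hP0 : NeZero P1 := by
    refine ⟨fun h0 => hnd ⟨0, 0, ?_⟩⟩
    rw [h0, zero_smul]
  obtain ⟨y, hy⟩ := exists_y P1 hnd
  refine ⟨y, fun x => ?_⟩
  -- basic objects
  have hL : ∀ z, 0 < L P1 z := fun z => integral_exp_pos (ieL P1 hb z)
  have hφeq : φ = fun z => Real.log (L P1 z) := funext hφ
  have hφ' : ∀ z, HasFDerivAt φ ((L P1 z)⁻¹ • G P1 z) z := by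
    intro z
    rw [hφeq]
    exact (hDL P1 hb z).log (hL z).ne'
  have hfd1 : fderiv ℝ φ = fun z => (L P1 z)⁻¹ • G P1 z := funext fun z => (hφ' z).fderiv
  have hDinv : ∀ z, HasFDerivAt (fun w => (L P1 w)⁻¹) ((-((L P1 z) ^ 2)⁻¹) • G P1 z) z :=
    fun z => (hasDerivAt_inv (hL z).ne').comp_hasFDerivAt z (hDL P1 hb z)
  have h2 : HasFDerivAt (fun z => (L P1 z)⁻¹ • G P1 z)
      ((L P1 x)⁻¹ • Hm P1 x + ((-((L P1 x) ^ 2)⁻¹) • G P1 x).smulRight (G P1 x)) x :=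
    (hDinv x).smul (hDG P1 hb x)
  have hsnd : fderiv ℝ (fderiv ℝ φ) x
      = (L P1 x)⁻¹ • Hm P1 x + ((-((L P1 x) ^ 2)⁻¹) • G P1 x).smulRight (G P1 x) := by
    rw [hfd1]
    exact h2.fderiv
  -- values
  set I1 : ℝ := ∫ σ, Real.exp (inner ℝ x σ : ℝ) * (inner ℝ σ y : ℝ) ∂P1 with hI1
  set I2 : ℝ := ∫ σ, Real.exp (inner ℝ x σ : ℝ) * (inner ℝ σ y : ℝ) ^ 2 ∂P1 with hI2
  have hGy : G P1 x y = I1 := by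
    rw [G, ContinuousLinearMap.integral_apply (ieG P1 hb x) y, hI1]
    refine integral_congr_ae (Filter.Eventually.of_forall fun σ => ?_)
    simp [smul_eq_mul]
  have hHyy : (Hm P1 x) y y = I2 := by
    rw [Hm, ContinuousLinearMap.integral_apply (ieH P1 hb x) y,
      ContinuousLinearMap.integral_apply ((ieH P1 hb x).apply_continuousLinearMap y) y, hI2]
    refine integral_congr_ae (Filter.Eventually.of_forall fun σ => ?_)
    simp [smul_eq_mul]
    ring
  have happ : (fderiv ℝ (fderiv ℝ φ) x) y y
      = (L P1 x)⁻¹ * I2 + (-((L P1 x) ^ 2)⁻¹ * I1) * I1 := by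
    rw [hsnd]
    simp only [ContinuousLinearMap.add_apply, ContinuousLinearMap.coe_smul', Pi.smul_apply,
      ContinuousLinearMap.smulRight_apply, ContinuousLinearMap.smul_apply, smul_eq_mul]
    rw [hGy, hHyy]
  rw [happ]
  -- positivity
  set m : ℝ := I1 / L P1 x with hm
  have ie0 := ieL P1 hb x
  have ie1 : Integrable (fun σ : EuclideanSpace ℝ (Fin D) =>
      Real.exp (inner ℝ x σ : ℝ) * (inner ℝ σ y : ℝ)) P1 := by
    refine integrable_aux P1 hb (((Real.continuous_exp.comp
      (Continuous.inner continuous_const continuous_id))).mul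
      (Continuous.inner continuous_id continuous_const)) (Real.exp ‖x‖ * ‖y‖) fun σ h => ?_
    rw [norm_mul, Real.norm_eq_abs, Real.norm_eq_abs, abs_of_pos (Real.exp_pos _)]
    exact mul_le_mul (Real.exp_le_exp.2 (inner_le_of_norm_le h)) (abs_inner_le h)
      (abs_nonneg _) (Real.exp_pos _).le
  have ie2 : Integrable (fun σ : EuclideanSpace ℝ (Fin D) =>
      Real.exp (inner ℝ x σ : ℝ) * (inner ℝ σ y : ℝ) ^ 2) P1 := by
    refine integrable_aux P1 hb (((Real.continuous_exp.comp
      (Continuous.inner continuous_const continuous_id))).mul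
      ((Continuous.inner continuous_id continuous_const).pow 2)) (Real.exp ‖x‖ * ‖y‖ ^ 2)
      fun σ h => ?_
    rw [norm_mul, Real.norm_eq_abs, Real.norm_eq_abs, abs_of_pos (Real.exp_pos _), abs_pow]
    refine mul_le_mul (Real.exp_le_exp.2 (inner_le_of_norm_le h))
      (pow_le_pow_left₀ (abs_nonneg _) (abs_inner_le h) 2) (by positivity) (Real.exp_pos _).le
  have iem : Integrable (fun σ : EuclideanSpace ℝ (Fin D) =>
      ((inner ℝ σ y : ℝ) - m) ^ 2 * Real.exp (inner ℝ x σ : ℝ)) P1 := by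
    have : (fun σ : EuclideanSpace ℝ (Fin D) =>
        ((inner ℝ σ y : ℝ) - m) ^ 2 * Real.exp (inner ℝ x σ : ℝ))
        = fun σ : EuclideanSpace ℝ (Fin D) =>
          (Real.exp (inner ℝ x σ : ℝ) * (inner ℝ σ y : ℝ) ^ 2
            - (2 * m) * (Real.exp (inner ℝ x σ : ℝ) * (inner ℝ σ y : ℝ))
            + (m ^ 2) * Real.exp (inner ℝ x σ : ℝ)) := by
      funext σ; ring
    rw [this]
    exact (ie2.sub (ie1.const_mul _)).add (ie0.const_mul _)
  have key : 0 < ∫ σ, ((inner ℝ σ y : ℝ) - m) ^ 2 * Real.exp (inner ℝ x σ : ℝ) ∂P1 := by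
    refine (integral_pos_iff_support_of_nonneg_ae ?_ iem).2 ?_
    · filter_upwards with σ
      exact mul_nonneg (sq_nonneg _) (Real.exp_pos _).le
    · have hsup : Function.support (fun σ : EuclideanSpace ℝ (Fin D) =>
          ((inner ℝ σ y : ℝ) - m) ^ 2 * Real.exp (inner ℝ x σ : ℝ))
          = {σ : EuclideanSpace ℝ (Fin D) | (inner ℝ σ y : ℝ) ≠ m} := by
        ext σ
        simp [Function.mem_support, Real.exp_ne_zero, sub_eq_zero, pow_eq_zero_iff]
      rw [hsup]
      exact pos_iff_ne_zero.2 (hy m)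
  have hexpand : ∫ σ, ((inner ℝ σ y : ℝ) - m) ^ 2 * Real.exp (inner ℝ x σ : ℝ) ∂P1
      = I2 - 2 * m * I1 + m ^ 2 * L P1 x := by
    have heq : (fun σ : EuclideanSpace ℝ (Fin D) =>
        ((inner ℝ σ y : ℝ) - m) ^ 2 * Real.exp (inner ℝ x σ : ℝ))
        = fun σ : EuclideanSpace ℝ (Fin D) =>
          (Real.exp (inner ℝ x σ : ℝ) * (inner ℝ σ y : ℝ) ^ 2
            - (2 * m) * (Real.exp (inner ℝ x σ : ℝ) * (inner ℝ σ y : ℝ))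
            + (m ^ 2) * Real.exp (inner ℝ x σ : ℝ)) := by
      funext σ; ring
    have ieA : Integrable (fun σ : EuclideanSpace ℝ (Fin D) =>
        Real.exp (inner ℝ x σ : ℝ) * (inner ℝ σ y : ℝ) ^ 2
          - (2 * m) * (Real.exp (inner ℝ x σ : ℝ) * (inner ℝ σ y : ℝ))) P1 :=
      ie2.sub (ie1.const_mul _)
    rw [heq, integral_add ieA (ie0.const_mul _),
      integral_sub ie2 (ie1.const_mul _), integral_const_mul, integral_const_mul]
    rfl
  have hfinal : (L P1 x)⁻¹ * I2 + (-((L P1 x) ^ 2)⁻¹ * I1) * I1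
      = (L P1 x)⁻¹ * (I2 - 2 * m * I1 + m ^ 2 * L P1 x) := by
    have ha : L P1 x ≠ 0 := (hL x).ne'
    rw [hm]
    field_simp
    ring
  rw [hfinal]
  exact mul_pos (inv_pos.2 (hL x)) (hexpand ▸ key)
end

section
/- Let α, α' : [0,1] → [0,1] be right-continuous increasing functions with α(0)=α'(0)≥0 and α(1)=α'(1)=1 (cumulative distribution functions), and let α^{-1}, α'^{-1} be their left-continuous generalized inverses (quantile functions). Then ∫₀¹ |α^{-1}(s) − α'^{-1}(s)| ds = ∫₀¹ |α(s) − α'(s)| ds. -/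
open Set MeasureTheory

/-- The left-continuous generalized inverse (quantile function) of `α` on `[0,1]`. -/
noncomputable def qinv (α : ℝ → ℝ) (s : ℝ) : ℝ :=
  sInf {t : ℝ | t ∈ Icc (0:ℝ) 1 ∧ s ≤ α t}

lemma qinv_mem (α : ℝ → ℝ) (h1 : α 1 = 1) {s : ℝ} (hs : s ∈ Icc (0:ℝ) 1) :
    qinv α s ∈ Icc (0:ℝ) 1 := by
  have h1mem : (1:ℝ) ∈ {t : ℝ | t ∈ Icc (0:ℝ) 1 ∧ s ≤ α t} :=
    ⟨⟨zero_le_one, le_refl 1⟩, by rw [h1]; exact hs.2⟩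
  have hbdd : BddBelow {t : ℝ | t ∈ Icc (0:ℝ) 1 ∧ s ≤ α t} :=
    ⟨0, fun t ht => ht.1.1⟩
  constructor
  · exact le_csInf ⟨1, h1mem⟩ (fun t ht => ht.1.1)
  · exact csInf_le hbdd h1mem

lemma qinv_le_iff (α : ℝ → ℝ) (hm : MonotoneOn α (Icc 0 1))
    (hrc : ∀ t ∈ Ico (0:ℝ) 1, ContinuousWithinAt α (Ici t) t) (h1 : α 1 = 1)
    {s t : ℝ} (hs : s ∈ Icc (0:ℝ) 1) (ht : t ∈ Icc (0:ℝ) 1) :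
    qinv α s ≤ t ↔ s ≤ α t := by
  have h1mem : (1:ℝ) ∈ {u : ℝ | u ∈ Icc (0:ℝ) 1 ∧ s ≤ α u} :=
    ⟨⟨zero_le_one, le_refl 1⟩, by rw [h1]; exact hs.2⟩
  have hne : {u : ℝ | u ∈ Icc (0:ℝ) 1 ∧ s ≤ α u}.Nonempty := ⟨1, h1mem⟩
  have hbdd : BddBelow {u : ℝ | u ∈ Icc (0:ℝ) 1 ∧ s ≤ α u} :=
    ⟨0, fun u hu => hu.1.1⟩
  constructor
  · intro h
    have hq : qinv α s ∈ Icc (0:ℝ) 1 := qinv_mem α h1 hs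
    have hkey : s ≤ α (qinv α s) := by
      rcases eq_or_lt_of_le hq.2 with heq | hlt
      · rw [heq, h1]; exact hs.2
      · by_contra hcon
        push_neg at hcon
        have hmem : {x : ℝ | α x < s} ∈ nhdsWithin (qinv α s) (Ici (qinv α s)) :=
          (hrc (qinv α s) ⟨hq.1, hlt⟩) (isOpen_Iio.mem_nhds hcon)
        rw [mem_nhdsGE_iff_exists_Ico_subset] at hmem
        obtain ⟨u, hu, hsub⟩ := hmem
        have hu' : qinv α s < u := hu
        obtain ⟨t', ht', ht'u⟩ := (csInf_lt_iff hbdd hne).mp hu'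
        have hge : qinv α s ≤ t' := csInf_le hbdd ht'
        have : α t' < s := hsub ⟨hge, ht'u⟩
        exact absurd ht'.2 (not_le.mpr this)
    exact hkey.trans (hm (qinv_mem α h1 hs) ht h)
  · intro h
    exact csInf_le hbdd ⟨ht, h⟩

lemma integral_ind_le (a b : ℝ) (hab : a ≤ b) (ha : 0 ≤ a) (hb : b ≤ 1) :
    ∫ s in Ioc (0:ℝ) 1, |(if s ≤ a then (1:ℝ) else 0) - (if s ≤ b then (1:ℝ) else 0)| = b - a := by
  have hfun : ∀ s : ℝ, |(if s ≤ a then (1:ℝ) else 0) - (if s ≤ b then (1:ℝ) else 0)|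
      = (Ioc a b).indicator (fun _ => (1:ℝ)) s := by
    intro s
    by_cases h1 : s ≤ a
    · rw [if_pos h1, if_pos (h1.trans hab), indicator_of_notMem (fun hmem => absurd h1 (not_le.mpr hmem.1))]
      simp
    · by_cases h2 : s ≤ b
      · rw [if_neg h1, if_pos h2, Set.indicator_of_mem (show s ∈ Ioc a b from ⟨not_le.mp h1, h2⟩) (fun _ => (1:ℝ))]
        simp
      · rw [if_neg h1, if_neg h2, indicator_of_notMem (fun hmem => absurd hmem.2 h2)]
        simp
  simp_rw [hfun]
  rw [MeasureTheory.setIntegral_indicator measurableSet_Ioc]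
  have hss : Ioc (0:ℝ) 1 ∩ Ioc a b = Ioc a b :=
    Set.inter_eq_self_of_subset_right (fun x hx => ⟨lt_of_le_of_lt ha hx.1, hx.2.trans hb⟩)
  rw [hss]
  simp [Real.volume_Ioc, ENNReal.toReal_ofReal (sub_nonneg.mpr hab), hab]

lemma integral_ind (a b : ℝ) (ha : a ∈ Icc (0:ℝ) 1) (hb : b ∈ Icc (0:ℝ) 1) :
    ∫ s in Ioc (0:ℝ) 1, |(if s ≤ a then (1:ℝ) else 0) - (if s ≤ b then (1:ℝ) else 0)| = |a - b| := by
  rcases le_total a b with h | h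
  · rw [integral_ind_le a b h ha.1 hb.2, abs_of_nonpos (sub_nonpos.mpr h), neg_sub]
  · have : ∀ s : ℝ, |(if s ≤ a then (1:ℝ) else 0) - (if s ≤ b then (1:ℝ) else 0)|
        = |(if s ≤ b then (1:ℝ) else 0) - (if s ≤ a then (1:ℝ) else 0)| := fun s => abs_sub_comm _ _
    simp_rw [this]
    rw [integral_ind_le b a h hb.1 ha.2, abs_of_nonneg (sub_nonneg.mpr h)]

lemma integral_ind_le' (q q' : ℝ) (hab : q ≤ q') (ha : 0 ≤ q) (hb : q' ≤ 1) :
    ∫ t in Ioc (0:ℝ) 1, |(if q ≤ t then (1:ℝ) else 0) - (if q' ≤ t then (1:ℝ) else 0)| = q' - q := by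
  have hfun : ∀ t : ℝ, |(if q ≤ t then (1:ℝ) else 0) - (if q' ≤ t then (1:ℝ) else 0)|
      = (Ico q q').indicator (fun _ => (1:ℝ)) t := by
    intro t
    by_cases h1 : q ≤ t
    · by_cases h2 : q' ≤ t
      · rw [if_pos h1, if_pos h2, indicator_of_notMem (fun hmem => absurd h2 (not_le.mpr hmem.2))]
        simp
      · rw [if_pos h1, if_neg h2, Set.indicator_of_mem (show t ∈ Ico q q' from ⟨h1, not_le.mp h2⟩) (fun _ => (1:ℝ))]
        simp
    · rw [if_neg h1, if_neg (fun h2 : q' ≤ t => h1 (hab.trans h2)),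
        indicator_of_notMem (fun hmem => h1 hmem.1)]
      simp
  simp_rw [hfun]
  rw [MeasureTheory.setIntegral_indicator measurableSet_Ico]
  have hvol : volume (Ioc (0:ℝ) 1 ∩ Ico q q') = ENNReal.ofReal (q' - q) := by
    apply le_antisymm
    · calc volume (Ioc (0:ℝ) 1 ∩ Ico q q') ≤ volume (Icc q q') :=
            measure_mono (fun x hx => ⟨hx.2.1, hx.2.2.le⟩)
        _ = ENNReal.ofReal (q' - q) := Real.volume_Icc
    · calc ENNReal.ofReal (q' - q) = volume (Ioo q q') := Real.volume_Ioo.symm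
        _ ≤ volume (Ioc (0:ℝ) 1 ∩ Ico q q') :=
            measure_mono (fun x hx => ⟨⟨lt_of_le_of_lt ha hx.1, (hx.2.trans_le hb).le⟩, ⟨hx.1.le, hx.2⟩⟩)
  simp [measureReal_def, hvol, ENNReal.toReal_ofReal (sub_nonneg.mpr hab)]

lemma integral_ind' (q q' : ℝ) (hq : q ∈ Icc (0:ℝ) 1) (hq' : q' ∈ Icc (0:ℝ) 1) :
    ∫ t in Ioc (0:ℝ) 1, |(if q ≤ t then (1:ℝ) else 0) - (if q' ≤ t then (1:ℝ) else 0)| = |q - q'| := by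
  rcases le_total q q' with h | h
  · rw [integral_ind_le' q q' h hq.1 hq'.2, abs_of_nonpos (sub_nonpos.mpr h), neg_sub]
  · have : ∀ t : ℝ, |(if q ≤ t then (1:ℝ) else 0) - (if q' ≤ t then (1:ℝ) else 0)|
        = |(if q' ≤ t then (1:ℝ) else 0) - (if q ≤ t then (1:ℝ) else 0)| := fun t => abs_sub_comm _ _
    simp_rw [this]
    rw [integral_ind_le' q' q h hq'.1 hq.2, abs_of_nonneg (sub_nonneg.mpr h)]

/-- For two cumulative distribution functions `α, α'` on `[0,1]` with the same value at `0`
and value `1` at `1`, the `L¹` distance of their quantile functions equals their `L¹` distance. -/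
theorem stmt7 (α α' : ℝ → ℝ)
    (hm : MonotoneOn α (Icc 0 1)) (hm' : MonotoneOn α' (Icc 0 1))
    (hval : ∀ t ∈ Icc (0:ℝ) 1, α t ∈ Icc (0:ℝ) 1)
    (hval' : ∀ t ∈ Icc (0:ℝ) 1, α' t ∈ Icc (0:ℝ) 1)
    (hrc : ∀ t ∈ Ico (0:ℝ) 1, ContinuousWithinAt α (Ici t) t)
    (hrc' : ∀ t ∈ Ico (0:ℝ) 1, ContinuousWithinAt α' (Ici t) t)
    (h0 : α 0 = α' 0) (h00 : 0 ≤ α 0) (h1 : α 1 = 1) (h1' : α' 1 = 1) :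
    ∫ s in (0:ℝ)..1, |qinv α s - qinv α' s| = ∫ s in (0:ℝ)..1, |α s - α' s| := by
  -- globally monotone extensions
  set β : ℝ → ℝ := fun t => α (max 0 (min t 1)) with hβ
  set β' : ℝ → ℝ := fun t => α' (max 0 (min t 1)) with hβ'
  have hproj_mem : ∀ t : ℝ, max 0 (min t 1) ∈ Icc (0:ℝ) 1 := fun t =>
    ⟨le_max_left _ _, max_le zero_le_one (min_le_right _ _)⟩
  have hproj_mono : Monotone fun t : ℝ => max 0 (min t 1) := fun x y hxy =>
    max_le_max le_rfl (min_le_min hxy le_rfl)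
  have hmβ : Monotone β := fun x y hxy => hm (hproj_mem x) (hproj_mem y) (hproj_mono hxy)
  have hmβ' : Monotone β' := fun x y hxy => hm' (hproj_mem x) (hproj_mem y) (hproj_mono hxy)
  have hβeq : ∀ t ∈ Icc (0:ℝ) 1, β t = α t := by
    intro t ht
    simp only [hβ]
    rw [min_eq_left ht.2, max_eq_right ht.1]
  have hβeq' : ∀ t ∈ Icc (0:ℝ) 1, β' t = α' t := by
    intro t ht
    simp only [hβ']
    rw [min_eq_left ht.2, max_eq_right ht.1]
  set f : ℝ → ℝ → ℝ := fun s t =>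
    |(if s ≤ β t then (1:ℝ) else 0) - (if s ≤ β' t then (1:ℝ) else 0)| with hf
  -- measurability and integrability
  have hmeas : Measurable (Function.uncurry f) := by
    have h1m : Measurable fun p : ℝ × ℝ => if p.1 ≤ β p.2 then (1:ℝ) else 0 :=
      Measurable.ite (measurableSet_le measurable_fst (hmβ.measurable.comp measurable_snd))
        measurable_const measurable_const
    have h2m : Measurable fun p : ℝ × ℝ => if p.1 ≤ β' p.2 then (1:ℝ) else 0 :=
      Measurable.ite (measurableSet_le measurable_fst (hmβ'.measurable.comp measurable_snd))
        measurable_const measurable_const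
    exact (h1m.sub h2m).abs
  haveI hfin : IsFiniteMeasure (volume.restrict (Ioc (0:ℝ) 1)) := by
    constructor
    rw [Measure.restrict_apply MeasurableSet.univ, Set.univ_inter, Real.volume_Ioc]
    exact ENNReal.ofReal_lt_top
  have hint : Integrable (Function.uncurry f)
      ((volume.restrict (Ioc (0:ℝ) 1)).prod (volume.restrict (Ioc (0:ℝ) 1))) := by
    refine ⟨hmeas.aestronglyMeasurable, ?_⟩
    apply MeasureTheory.HasFiniteIntegral.of_bounded (C := 1)
    filter_upwards with p
    simp only [Function.uncurry, hf, Real.norm_eq_abs, abs_abs]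
    split_ifs <;> norm_num
  -- Fubini
  have hswap : ∫ s in Ioc (0:ℝ) 1, ∫ t in Ioc (0:ℝ) 1, f s t
      = ∫ t in Ioc (0:ℝ) 1, ∫ s in Ioc (0:ℝ) 1, f s t :=
    MeasureTheory.integral_integral_swap hint
  rw [intervalIntegral.integral_of_le zero_le_one, intervalIntegral.integral_of_le zero_le_one]
  have hLHS : ∫ s in Ioc (0:ℝ) 1, |qinv α s - qinv α' s|
      = ∫ s in Ioc (0:ℝ) 1, ∫ t in Ioc (0:ℝ) 1, f s t := by
    apply setIntegral_congr_fun measurableSet_Ioc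
    intro s hs
    have hs' : s ∈ Icc (0:ℝ) 1 := ⟨hs.1.le, hs.2⟩
    show |qinv α s - qinv α' s| = ∫ t in Ioc (0:ℝ) 1, f s t
    have hinner : ∫ t in Ioc (0:ℝ) 1, f s t
        = ∫ t in Ioc (0:ℝ) 1,
            |(if qinv α s ≤ t then (1:ℝ) else 0) - (if qinv α' s ≤ t then (1:ℝ) else 0)| := by
      apply setIntegral_congr_fun measurableSet_Ioc
      intro t ht
      have ht' : t ∈ Icc (0:ℝ) 1 := ⟨ht.1.le, ht.2⟩
      simp only [hf]
      rw [hβeq t ht', hβeq' t ht']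
      rw [if_congr (Iff.symm (qinv_le_iff α hm hrc h1 hs' ht')) rfl rfl,
        if_congr (Iff.symm (qinv_le_iff α' hm' hrc' h1' hs' ht')) rfl rfl]
    rw [hinner, integral_ind' (qinv α s) (qinv α' s) (qinv_mem α h1 hs') (qinv_mem α' h1' hs')]
  have hRHS : ∫ t in Ioc (0:ℝ) 1, |α t - α' t|
      = ∫ t in Ioc (0:ℝ) 1, ∫ s in Ioc (0:ℝ) 1, f s t := by
    apply setIntegral_congr_fun measurableSet_Ioc
    intro t ht
    have ht' : t ∈ Icc (0:ℝ) 1 := ⟨ht.1.le, ht.2⟩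
    show |α t - α' t| = ∫ s in Ioc (0:ℝ) 1, f s t
    have hinner : ∫ s in Ioc (0:ℝ) 1, f s t
        = ∫ s in Ioc (0:ℝ) 1,
            |(if s ≤ α t then (1:ℝ) else 0) - (if s ≤ α' t then (1:ℝ) else 0)| := by
      apply setIntegral_congr_fun measurableSet_Ioc
      intro s _
      simp only [hf]
      rw [hβeq t ht', hβeq' t ht']
    rw [hinner, integral_ind (α t) (α' t) (hval t ht') (hval' t ht')]
  rw [hLHS, hRHS, hswap]
end
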